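/- arXiv:2103.07116 — 6 statements merged into one kernel-verified Lean document; each statement's English description precedes it below -/
import Mathlib

section
/- Suppose two Manhattan-optimal grid paths p1 (from S1 to G1, over time interval [t0, t0+L1]) and p2 (from S2 to G2, over [t0, t0+L2]) both move weakly in the same direction along each axis, i.e., (S1.x−G1.x)(S2.x−G2.x) ≥ 0 and (S1.y−G1.y)(S2.y−G2.y) ≥ 0, and they start at the same timestep t0. If p1 and p2 conflict at some common cell at some common timestep, then for every cell c in the intersection of the S1-G1 rectangle and the S2-G2 rectangle, the Manhattan distance from S1 to c equals the Manhattan distance from S2 to c. -/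
/-- A step on the 4-neighbor grid: move by 1 in exactly one coordinate, or wait. -/
def GridStep (a b : ℤ × ℤ) : Prop := |b.1 - a.1| + |b.2 - a.2| ≤ 1

/-- Membership in the axis-aligned rectangle with diagonal corners `S` and `G`. -/
def InRect (S G c : ℤ × ℤ) : Prop :=
  min S.1 G.1 ≤ c.1 ∧ c.1 ≤ max S.1 G.1 ∧ min S.2 G.2 ≤ c.2 ∧ c.2 ≤ max S.2 G.2

lemma path_dist (L : ℕ) (p : ℕ → ℤ × ℤ) (hstep : ∀ t < L, GridStep (p t) (p (t + 1))) :
    ∀ u, u ≤ L → ∀ t, t ≤ u → |(p u).1 - (p t).1| + |(p u).2 - (p t).2| ≤ (u : ℤ) - t := by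
  intro u
  induction u with
  | zero =>
    intro _ t ht
    have : t = 0 := Nat.le_zero.mp ht
    subst this; simp
  | succ n ih =>
    intro hu t ht
    rcases Nat.eq_or_lt_of_le ht with heq | hlt
    · subst heq; simp
    · have ht' : t ≤ n := Nat.lt_succ_iff.mp hlt
      have h1 := ih (by omega) t ht'
      have h2 := hstep n (by omega)
      unfold GridStep at h2
      have t1 : |(p (n+1)).1 - (p t).1| ≤ |(p (n+1)).1 - (p n).1| + |(p n).1 - (p t).1| :=
        abs_sub_le _ _ _
      have t2 : |(p (n+1)).2 - (p t).2| ≤ |(p (n+1)).2 - (p n).2| + |(p n).2 - (p t).2| :=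
        abs_sub_le _ _ _
      push_cast
      push_cast at h1
      linarith

lemma axis_eq (s1 g1 s2 g2 x y : ℤ) (hdir : (s1 - g1) * (s2 - g2) ≥ 0)
    (hx1l : min s1 g1 ≤ x) (hx1r : x ≤ max s1 g1)
    (hx2l : min s2 g2 ≤ x) (hx2r : x ≤ max s2 g2)
    (hy1l : min s1 g1 ≤ y) (hy1r : y ≤ max s1 g1)
    (hy2l : min s2 g2 ≤ y) (hy2r : y ≤ max s2 g2) :
    |x - s1| - |x - s2| = |y - s1| - |y - s2| := by
  rcases le_total s1 g1 with h1 | h1 <;> rcases le_total s2 g2 with h2 | h2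
  · rw [abs_of_nonneg (by omega : (0:ℤ) ≤ x - s1), abs_of_nonneg (by omega : (0:ℤ) ≤ x - s2),
      abs_of_nonneg (by omega : (0:ℤ) ≤ y - s1), abs_of_nonneg (by omega : (0:ℤ) ≤ y - s2)]
    ring
  · have h0 : (s1 - g1) * (s2 - g2) ≤ 0 :=
      mul_nonpos_of_nonpos_of_nonneg (by omega) (by omega)
    have heq : (s1 - g1) * (s2 - g2) = 0 := le_antisymm h0 hdir
    rcases mul_eq_zero.mp heq with h | h
    · have : x = y := by omega
      rw [this]
    · have : x = y := by omega
      rw [this]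
  · have h0 : (s1 - g1) * (s2 - g2) ≤ 0 :=
      mul_nonpos_of_nonneg_of_nonpos (by omega) (by omega)
    have heq : (s1 - g1) * (s2 - g2) = 0 := le_antisymm h0 hdir
    rcases mul_eq_zero.mp heq with h | h
    · have : x = y := by omega
      rw [this]
    · have : x = y := by omega
      rw [this]
  · rw [abs_of_nonpos (by omega : x - s1 ≤ 0), abs_of_nonpos (by omega : x - s2 ≤ 0),
      abs_of_nonpos (by omega : y - s1 ≤ 0), abs_of_nonpos (by omega : y - s2 ≤ 0)]
    ring

lemma between_of_abs (s g x : ℤ) (h : |s - g| = |x - s| + |g - x|) :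
    min s g ≤ x ∧ x ≤ max s g := by
  rcases abs_cases (s - g) with ⟨h1, _⟩ | ⟨h1, _⟩ <;>
    rcases abs_cases (x - s) with ⟨h2, _⟩ | ⟨h2, _⟩ <;>
    rcases abs_cases (g - x) with ⟨h3, _⟩ | ⟨h3, _⟩ <;> omega

/-- If two Manhattan-optimal grid paths starting at the same timestep move weakly in the
same direction along each axis and conflict at some common cell at some common timestep,
then every cell in the intersection of the `S1`-`G1` and `S2`-`G2` rectangles is at equal
Manhattan distance from both starts. -/
theorem rectangle_conflict_equal_distances
    (t0 : ℤ) (L1 L2 : ℕ) (S1 G1 S2 G2 : ℤ × ℤ) (p1 p2 : ℕ → ℤ × ℤ)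
    (hS1 : p1 0 = S1) (hG1 : p1 L1 = G1)
    (hS2 : p2 0 = S2) (hG2 : p2 L2 = G2)
    (hstep1 : ∀ t < L1, GridStep (p1 t) (p1 (t + 1)))
    (hstep2 : ∀ t < L2, GridStep (p2 t) (p2 (t + 1)))
    (hopt1 : (L1 : ℤ) = |S1.1 - G1.1| + |S1.2 - G1.2|)
    (hopt2 : (L2 : ℤ) = |S2.1 - G2.1| + |S2.2 - G2.2|)
    (hdirx : (S1.1 - G1.1) * (S2.1 - G2.1) ≥ 0)
    (hdiry : (S1.2 - G1.2) * (S2.2 - G2.2) ≥ 0)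
    (hconf : ∃ t, t ≤ L1 ∧ t ≤ L2 ∧ p1 t = p2 t) :
    ∀ c : ℤ × ℤ, InRect S1 G1 c → InRect S2 G2 c →
      |c.1 - S1.1| + |c.2 - S1.2| = |c.1 - S2.1| + |c.2 - S2.2| := by
  obtain ⟨t, ht1, ht2, hc⟩ := hconf
  set v := p1 t with hv
  -- distances for path 1
  have d1a : |v.1 - S1.1| + |v.2 - S1.2| ≤ (t : ℤ) := by
    have := path_dist L1 p1 hstep1 t ht1 0 (Nat.zero_le _)
    rw [hS1] at this; simpa using this
  have d1b : |G1.1 - v.1| + |G1.2 - v.2| ≤ (L1 : ℤ) - t := by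
    have := path_dist L1 p1 hstep1 L1 le_rfl t ht1
    rw [hG1] at this; exact this
  have tri1x : |S1.1 - G1.1| ≤ |v.1 - S1.1| + |G1.1 - v.1| := by
    have := abs_sub_le S1.1 v.1 G1.1
    rw [abs_sub_comm S1.1 v.1, abs_sub_comm v.1 G1.1] at this
    exact this
  have tri1y : |S1.2 - G1.2| ≤ |v.2 - S1.2| + |G1.2 - v.2| := by
    have := abs_sub_le S1.2 v.2 G1.2
    rw [abs_sub_comm S1.2 v.2, abs_sub_comm v.2 G1.2] at this
    exact this
  have e1 : |v.1 - S1.1| + |v.2 - S1.2| = (t : ℤ) := by linarith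
  have ex1 : |S1.1 - G1.1| = |v.1 - S1.1| + |G1.1 - v.1| := by linarith
  have ey1 : |S1.2 - G1.2| = |v.2 - S1.2| + |G1.2 - v.2| := by linarith
  have rv1x := between_of_abs S1.1 G1.1 v.1 ex1
  have rv1y := between_of_abs S1.2 G1.2 v.2 ey1
  -- distances for path 2
  have hv2 : v = p2 t := hc
  have d2a : |v.1 - S2.1| + |v.2 - S2.2| ≤ (t : ℤ) := by
    have := path_dist L2 p2 hstep2 t ht2 0 (Nat.zero_le _)
    rw [hS2, ← hv2] at this; simpa using this
  have d2b : |G2.1 - v.1| + |G2.2 - v.2| ≤ (L2 : ℤ) - t := by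
    have := path_dist L2 p2 hstep2 L2 le_rfl t ht2
    rw [hG2, ← hv2] at this; exact this
  have tri2x : |S2.1 - G2.1| ≤ |v.1 - S2.1| + |G2.1 - v.1| := by
    have := abs_sub_le S2.1 v.1 G2.1
    rw [abs_sub_comm S2.1 v.1, abs_sub_comm v.1 G2.1] at this
    exact this
  have tri2y : |S2.2 - G2.2| ≤ |v.2 - S2.2| + |G2.2 - v.2| := by
    have := abs_sub_le S2.2 v.2 G2.2
    rw [abs_sub_comm S2.2 v.2, abs_sub_comm v.2 G2.2] at this
    exact this
  have e2 : |v.1 - S2.1| + |v.2 - S2.2| = (t : ℤ) := by linarith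
  have ex2 : |S2.1 - G2.1| = |v.1 - S2.1| + |G2.1 - v.1| := by linarith
  have ey2 : |S2.2 - G2.2| = |v.2 - S2.2| + |G2.2 - v.2| := by linarith
  have rv2x := between_of_abs S2.1 G2.1 v.1 ex2
  have rv2y := between_of_abs S2.2 G2.2 v.2 ey2
  intro c hc1 hc2
  obtain ⟨a1, a2, a3, a4⟩ := hc1
  obtain ⟨b1, b2, b3, b4⟩ := hc2
  have ax := axis_eq S1.1 G1.1 S2.1 G2.1 c.1 v.1 hdirx a1 a2 b1 b2 rv1x.1 rv1x.2 rv2x.1 rv2x.2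
  have ay := axis_eq S1.2 G1.2 S2.2 G2.2 c.2 v.2 hdiry a3 a4 b3 b4 rv1y.1 rv1y.2 rv2y.1 rv2y.2
  linarith
end

section
/- Let two timed monotone lattice paths p1 and p2 in ℤ² both move only with steps (+1,0) or (0,+1), one step per timestep, with equal Manhattan distance from their respective start cells to any common rectangle cell. Suppose p1 goes from a cell on the left border {0}×[0,b] of the rectangle [0,a]×[0,b] to a cell on the right border {a}×[0,b], and p2 goes from a cell on the bottom border [0,a]×{0} to a cell on the top border [0,a]×{b}, and at every timestep t each path is at a cell whose Manhattan distance from (0,0) equals t (both paths are synchronized this way). Then p1 and p2 visit a common cell at the same timestep. -/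
/-- Coordinates of a monotone lattice path are nondecreasing. -/
lemma path_mono (p : ℤ → ℤ × ℤ) (s e : ℤ)
    (hstep : ∀ t, s ≤ t → t < e →
      p (t + 1) = ((p t).1 + 1, (p t).2) ∨ p (t + 1) = ((p t).1, (p t).2 + 1)) :
    ∀ (n : ℕ) (t : ℤ), s ≤ t → t + n ≤ e →
      (p t).1 ≤ (p (t + n)).1 ∧ (p t).2 ≤ (p (t + n)).2 := by
  intro n
  induction n with
  | zero => intro t _ _; simp
  | succ n ih =>
    intro t ht hte
    have hcast : (t : ℤ) + ((n + 1 : ℕ) : ℤ) = (t + n) + 1 := by push_cast; ring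
    have hte' : t + (n : ℤ) ≤ e := by push_cast at hte; omega
    have h1 := ih t ht hte'
    have hs := hstep (t + n) (by omega) (by push_cast at hte; omega)
    rw [hcast]
    rcases hs with h | h <;> rw [h] <;> constructor <;> simp <;> omega

/-- Discrete intermediate value theorem: a function with increments at most 1
going from ≤ 0 to ≥ 0 hits 0. -/
lemma int_ivt (g : ℤ → ℤ) : ∀ (n : ℕ) (t0 : ℤ),
    (∀ t, t0 ≤ t → t < t0 + n → g (t + 1) ≤ g t + 1) →
    g t0 ≤ 0 → 0 ≤ g (t0 + n) → ∃ t, t0 ≤ t ∧ t ≤ t0 + n ∧ g t = 0 := by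
  intro n
  induction n with
  | zero =>
    intro t0 _ h0 h1
    refine ⟨t0, le_refl _, by simp, ?_⟩
    simp at h1
    omega
  | succ n ih =>
    intro t0 hstep h0 h1
    by_cases hz : g (t0 + 1) ≤ 0
    · have h1' : 0 ≤ g (t0 + 1 + n) := by
        have : t0 + 1 + (n : ℤ) = t0 + ((n + 1 : ℕ) : ℤ) := by push_cast; ring
        rw [this]; exact h1
      obtain ⟨t, ht1, ht2, ht3⟩ := ih (t0 + 1)
        (fun t ht ht' => hstep t (by omega) (by push_cast at ht' ⊢; omega)) hz h1'
      exact ⟨t, by omega, by push_cast; omega, ht3⟩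
    · have hs := hstep t0 le_rfl (by push_cast; omega)
      exact ⟨t0, le_rfl, by push_cast; omega, by omega⟩

/-- Two synchronized timed monotone lattice paths (steps `(+1,0)` or `(0,+1)`, one per
timestep, at timestep `t` on the anti-diagonal `x + y = t`), one crossing the rectangle
`[0,a] × [0,b]` from its left border to its right border and the other from its bottom
border to its top border, must visit a common cell at the same timestep. -/
theorem crossing_paths_conflict
    (a b : ℤ) (ha : 0 ≤ a) (hb : 0 ≤ b)
    (s1 e1 s2 e2 : ℤ) (p1 p2 : ℤ → ℤ × ℤ)
    (hs1 : s1 ≤ e1) (hs2 : s2 ≤ e2)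
    (hstep1 : ∀ t, s1 ≤ t → t < e1 →
      p1 (t + 1) = ((p1 t).1 + 1, (p1 t).2) ∨ p1 (t + 1) = ((p1 t).1, (p1 t).2 + 1))
    (hstep2 : ∀ t, s2 ≤ t → t < e2 →
      p2 (t + 1) = ((p2 t).1 + 1, (p2 t).2) ∨ p2 (t + 1) = ((p2 t).1, (p2 t).2 + 1))
    (hsync1 : ∀ t, s1 ≤ t → t ≤ e1 → (p1 t).1 + (p1 t).2 = t)
    (hsync2 : ∀ t, s2 ≤ t → t ≤ e2 → (p2 t).1 + (p2 t).2 = t)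
    (hstart1 : (p1 s1).1 = 0 ∧ 0 ≤ (p1 s1).2 ∧ (p1 s1).2 ≤ b)
    (hend1 : (p1 e1).1 = a ∧ 0 ≤ (p1 e1).2 ∧ (p1 e1).2 ≤ b)
    (hstart2 : (p2 s2).2 = 0 ∧ 0 ≤ (p2 s2).1 ∧ (p2 s2).1 ≤ a)
    (hend2 : (p2 e2).2 = b ∧ 0 ≤ (p2 e2).1 ∧ (p2 e2).1 ≤ a) :
    ∃ t, s1 ≤ t ∧ t ≤ e1 ∧ s2 ≤ t ∧ t ≤ e2 ∧ p1 t = p2 t := by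
  -- Boundary time values
  have hsy1 := hsync1 s1 le_rfl hs1
  have hey1 := hsync1 e1 hs1 le_rfl
  have hsy2 := hsync2 s2 le_rfl hs2
  have hey2 := hsync2 e2 hs2 le_rfl
  -- s1 = y1(s1) ∈ [0,b], e1 = a + y1(e1) ∈ [a,a+b], s2 = x2(s2) ∈ [0,a], e2 = b + x2(e2) ∈ [b,a+b]
  have hs1v : 0 ≤ s1 ∧ s1 ≤ b := by omega
  have he1v : a ≤ e1 ∧ e1 ≤ a + b := by omega
  have hs2v : 0 ≤ s2 ∧ s2 ≤ a := by omega
  have he2v : b ≤ e2 ∧ e2 ≤ a + b := by omega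
  set t0 := max s1 s2 with ht0
  set t1 := min e1 e2 with ht1
  have ht01 : t0 ≤ t1 := by
    simp only [ht0, ht1, max_le_iff, le_min_iff]
    omega
  -- Define g t = x1 t - x2 t
  set g : ℤ → ℤ := fun t => (p1 t).1 - (p2 t).1 with hg
  have ht0s1 : s1 ≤ t0 := le_max_left _ _
  have ht0s2 : s2 ≤ t0 := le_max_right _ _
  have ht1e1 : t1 ≤ e1 := min_le_left _ _
  have ht1e2 : t1 ≤ e2 := min_le_right _ _
  -- monotonicity facts
  have hm1a : (p1 s1).1 ≤ (p1 t0).1 ∧ (p1 s1).2 ≤ (p1 t0).2 := by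
    have h := path_mono p1 s1 e1 hstep1 (t0 - s1).toNat s1 le_rfl (by omega)
    have : s1 + ((t0 - s1).toNat : ℤ) = t0 := by omega
    rwa [this] at h
  have hm2a : (p2 s2).1 ≤ (p2 t0).1 ∧ (p2 s2).2 ≤ (p2 t0).2 := by
    have h := path_mono p2 s2 e2 hstep2 (t0 - s2).toNat s2 le_rfl (by omega)
    have : s2 + ((t0 - s2).toNat : ℤ) = t0 := by omega
    rwa [this] at h
  have hm1b : (p1 t1).1 ≤ (p1 e1).1 ∧ (p1 t1).2 ≤ (p1 e1).2 := by
    have h := path_mono p1 s1 e1 hstep1 (e1 - t1).toNat t1 (by omega) (by omega)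
    have : t1 + ((e1 - t1).toNat : ℤ) = e1 := by omega
    rwa [this] at h
  have hm2b : (p2 t1).1 ≤ (p2 e2).1 ∧ (p2 t1).2 ≤ (p2 e2).2 := by
    have h := path_mono p2 s2 e2 hstep2 (e2 - t1).toNat t1 (by omega) (by omega)
    have : t1 + ((e2 - t1).toNat : ℤ) = e2 := by omega
    rwa [this] at h
  -- sync at t0 and t1
  have hsyt01 := hsync1 t0 ht0s1 (by omega)
  have hsyt02 := hsync2 t0 ht0s2 (by omega)
  have hsyt11 := hsync1 t1 (by omega) ht1e1
  have hsyt12 := hsync2 t1 (by omega) ht1e2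
  -- g t0 ≤ 0 and 0 ≤ g t1
  have hg0 : g t0 ≤ 0 := by simp only [hg]; omega
  have hg1 : 0 ≤ g t1 := by simp only [hg]; omega
  -- step bound for g
  have hgstep : ∀ t, t0 ≤ t → t < t0 + ((t1 - t0).toNat : ℤ) → g (t + 1) ≤ g t + 1 := by
    intro t ht ht'
    have ht'' : t < t1 := by omega
    have h1 := hstep1 t (by omega) (by omega)
    have h2 := hstep2 t (by omega) (by omega)
    simp only [hg]
    rcases h1 with h1 | h1 <;> rcases h2 with h2 | h2 <;> rw [h1, h2] <;> simp <;> omega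
  obtain ⟨t, htl, htu, htz⟩ := int_ivt g (t1 - t0).toNat t0 hgstep hg0
    (by rw [show t0 + ((t1 - t0).toNat : ℤ) = t1 by omega]; exact hg1)
  have htu' : t ≤ t1 := by omega
  have hts1 : s1 ≤ t := by omega
  have hte1 : t ≤ e1 := by omega
  have hts2 : s2 ≤ t := by omega
  have hte2 : t ≤ e2 := by omega
  have hx : (p1 t).1 = (p2 t).1 := by simp only [hg] at htz; omega
  have hy1 := hsync1 t hts1 hte1
  have hy2 := hsync2 t hts2 hte2
  exact ⟨t, hts1, hte1, hts2, hte2, Prod.ext hx (by omega)⟩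
end

section
/- Let N be a CT node in CBS with constraint sets C₁ and C₂ added to its two children, where C₁ constrains only agent a₁ and C₂ constrains only agent a₂, and suppose C₁ and C₂ are mutually disjunctive for N: every pair of paths (p₁ for a₁, p₂ for a₂) consistent with N such that p₁ violates some constraint in C₁ and p₂ violates some constraint in C₂ is in conflict. Then every conflict-free solution consistent with N is consistent with at least one of the two children. -/
/-- A path `p` (of agent `i`) is consistent with a constraint set `CS` if it violates
none of the constraints of `CS` that constrain agent `i`. -/
def Consistent {ι Path Con : Type*} (agentOf : Con → ι) (Violates : Path → Con → Prop)
    (i : ι) (p : Path) (CS : Set Con) : Prop :=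
  ∀ c ∈ CS, agentOf c = i → ¬ Violates p c

/-- If the constraint sets `C₁` (constraining only agent `a₁`) and `C₂` (constraining
only agent `a₂`) added to the two children of CT node `N` are mutually disjunctive for
`N`, then every conflict-free solution consistent with `N` is consistent with at least
one of the two children. -/
theorem mutually_disjunctive_constraints_complete
    {ι Path Con : Type*} (agentOf : Con → ι) (Violates : Path → Con → Prop)
    (Conflict : Path → Path → Prop)
    (a₁ a₂ : ι) (hne : a₁ ≠ a₂)
    (N C₁ C₂ : Set Con)
    (hC₁ : ∀ c ∈ C₁, agentOf c = a₁)
    (hC₂ : ∀ c ∈ C₂, agentOf c = a₂)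
    (hdisj : ∀ p₁ p₂ : Path,
      Consistent agentOf Violates a₁ p₁ N → Consistent agentOf Violates a₂ p₂ N →
      (∃ c ∈ C₁, Violates p₁ c) → (∃ c ∈ C₂, Violates p₂ c) → Conflict p₁ p₂) :
    ∀ sol : ι → Path,
      (∀ i, Consistent agentOf Violates i (sol i) N) →
      (∀ i j, i ≠ j → ¬ Conflict (sol i) (sol j)) →
      (∀ i, Consistent agentOf Violates i (sol i) (N ∪ C₁)) ∨
      (∀ i, Consistent agentOf Violates i (sol i) (N ∪ C₂)) := by
  intro sol hN hcf
  by_cases h1 : ∃ c ∈ C₁, Violates (sol a₁) c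
  · right
    intro i c hc hag hv
    rcases hc with hc | hc
    · exact hN i c hc hag hv
    · have := hC₂ c hc
      have hi : a₂ = i := this ▸ hag
      subst hi
      exact hcf a₁ a₂ hne
        (hdisj (sol a₁) (sol a₂) (hN a₁) (hN a₂) h1 ⟨c, hc, hv⟩)
  · left
    intro i c hc hag hv
    rcases hc with hc | hc
    · exact hN i c hc hag hv
    · have := hC₁ c hc
      have hi : a₁ = i := this ▸ hag
      subst hi
      exact h1 ⟨c, hc, hv⟩
end

section
/- Let p1 be a monotone lattice path (steps (+1,0) or (0,+1)) visiting, at each timestep t, a cell (x,y) with x+y=t, that enters the rectangle [0,a]×[0,b] through its left border and exits through its right border; let p2 be such a path entering through the bottom border and exiting through the top border, synchronized the same way. Then the cell where they meet (which exists) lies inside the rectangle [0,a]×[0,b]. -/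
lemma path_mono_aux (p : ℤ → ℤ × ℤ) (s e : ℤ)
    (hstep : ∀ t, s ≤ t → t < e →
      p (t + 1) = ((p t).1 + 1, (p t).2) ∨ p (t + 1) = ((p t).1, (p t).2 + 1)) :
    ∀ t u, s ≤ t → t ≤ u → u ≤ e → (p t).1 ≤ (p u).1 ∧ (p t).2 ≤ (p u).2 := by
  intro t u hst htu
  refine Int.le_induction (motive := fun u _ => u ≤ e → (p t).1 ≤ (p u).1 ∧ (p t).2 ≤ (p u).2)
    (fun _ => ⟨le_refl _, le_refl _⟩) ?_ u htu
  intro n hn ih hue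
  have h1 := ih (by omega)
  rcases hstep n (by omega) (by omega) with h | h <;> rw [h] <;>
    exact ⟨by simp; omega, by simp; omega⟩

lemma int_ivt_nat (f : ℤ → ℤ) : ∀ n : ℕ, ∀ t0 : ℤ,
    (∀ t, t0 ≤ t → t < t0 + n → f (t + 1) ≤ f t + 1) →
    f t0 ≤ 0 → 0 ≤ f (t0 + n) → ∃ t, t0 ≤ t ∧ t ≤ t0 + n ∧ f t = 0 := by
  intro n
  induction n with
  | zero =>
    intro t0 _ h0 h1
    exact ⟨t0, le_refl _, by simp, by simp at h1; omega⟩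
  | succ n ih =>
    intro t0 hstep h0 h1
    by_cases hz : f t0 = 0
    · exact ⟨t0, le_refl _, by push_cast; omega, hz⟩
    · have h01 : f (t0 + 1) ≤ 0 := by
        have := hstep t0 (le_refl _) (by push_cast; omega)
        omega
      have heq : t0 + 1 + (n : ℤ) = t0 + ((n : ℕ) + 1 : ℕ) := by push_cast; ring
      obtain ⟨t, ht1, ht2, ht3⟩ := ih (t0 + 1)
        (fun t ht ht' => hstep t (by omega) (by push_cast at ht' ⊢; omega))
        h01 (by rw [heq]; exact h1)
      exact ⟨t, by omega, by push_cast at ht2 ⊢; omega, ht3⟩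

lemma int_ivt_s10 (f : ℤ → ℤ) (t0 t1 : ℤ) (h : t0 ≤ t1)
    (hstep : ∀ t, t0 ≤ t → t < t1 → f (t + 1) ≤ f t + 1)
    (h0 : f t0 ≤ 0) (h1 : 0 ≤ f t1) : ∃ t, t0 ≤ t ∧ t ≤ t1 ∧ f t = 0 := by
  have hn : t0 + ((t1 - t0).toNat : ℤ) = t1 := by omega
  obtain ⟨t, ht1, ht2, ht3⟩ := int_ivt_nat f (t1 - t0).toNat t0
    (fun t ht ht' => hstep t ht (by omega)) h0 (by rw [hn]; exact h1)
  exact ⟨t, ht1, by omega, ht3⟩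

/-- Two synchronized monotone lattice paths, one crossing the rectangle `[0,a] × [0,b]`
from its left border to its right border and the other from its bottom border to its top
border, meet at a common cell at a common timestep, and the meeting cell lies inside the
rectangle `[0,a] × [0,b]`. -/
theorem crossing_paths_meet_inside_rectangle
    (a b : ℤ) (ha : 0 ≤ a) (hb : 0 ≤ b)
    (s1 e1 s2 e2 : ℤ) (p1 p2 : ℤ → ℤ × ℤ)
    (hs1 : s1 ≤ e1) (hs2 : s2 ≤ e2)
    (hstep1 : ∀ t, s1 ≤ t → t < e1 →
      p1 (t + 1) = ((p1 t).1 + 1, (p1 t).2) ∨ p1 (t + 1) = ((p1 t).1, (p1 t).2 + 1))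
    (hstep2 : ∀ t, s2 ≤ t → t < e2 →
      p2 (t + 1) = ((p2 t).1 + 1, (p2 t).2) ∨ p2 (t + 1) = ((p2 t).1, (p2 t).2 + 1))
    (hsync1 : ∀ t, s1 ≤ t → t ≤ e1 → (p1 t).1 + (p1 t).2 = t)
    (hsync2 : ∀ t, s2 ≤ t → t ≤ e2 → (p2 t).1 + (p2 t).2 = t)
    (hstart1 : (p1 s1).1 = 0 ∧ 0 ≤ (p1 s1).2 ∧ (p1 s1).2 ≤ b)
    (hend1 : (p1 e1).1 = a ∧ 0 ≤ (p1 e1).2 ∧ (p1 e1).2 ≤ b)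
    (hstart2 : (p2 s2).2 = 0 ∧ 0 ≤ (p2 s2).1 ∧ (p2 s2).1 ≤ a)
    (hend2 : (p2 e2).2 = b ∧ 0 ≤ (p2 e2).1 ∧ (p2 e2).1 ≤ a) :
    ∃ t, s1 ≤ t ∧ t ≤ e1 ∧ s2 ≤ t ∧ t ≤ e2 ∧ p1 t = p2 t ∧
      0 ≤ (p1 t).1 ∧ (p1 t).1 ≤ a ∧ 0 ≤ (p1 t).2 ∧ (p1 t).2 ≤ b := by
  have mono1 := path_mono_aux p1 s1 e1 hstep1
  have mono2 := path_mono_aux p2 s2 e2 hstep2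
  -- endpoint facts
  have hsy1 := hsync1 s1 (le_refl _) hs1
  have hey1 := hsync1 e1 hs1 (le_refl _)
  have hsy2 := hsync2 s2 (le_refl _) hs2
  have hey2 := hsync2 e2 hs2 (le_refl _)
  have hy1s : (p1 s1).2 = s1 := by omega
  have hy1e : (p1 e1).2 = e1 - a := by omega
  have hx2s : (p2 s2).1 = s2 := by omega
  have hx2e : (p2 e2).1 = e2 - b := by omega
  have hs1b : 0 ≤ s1 ∧ s1 ≤ b := by omega
  have he1b : a ≤ e1 ∧ e1 ≤ a + b := by omega
  have hs2b : 0 ≤ s2 ∧ s2 ≤ a := by omega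
  have he2b : b ≤ e2 ∧ e2 ≤ a + b := by omega
  set t0 := max s1 s2 with ht0
  set t1 := min e1 e2 with ht1
  have ht01 : t0 ≤ t1 := by omega
  have ht0s1 : s1 ≤ t0 := le_max_left _ _
  have ht0s2 : s2 ≤ t0 := le_max_right _ _
  have ht1e1 : t1 ≤ e1 := min_le_left _ _
  have ht1e2 : t1 ≤ e2 := min_le_right _ _
  -- f t0 ≤ 0
  have hm1 := mono1 s1 t0 (le_refl _) ht0s1 (by omega)
  have hm2 := mono2 s2 t0 (le_refl _) ht0s2 (by omega)
  have hsy1t0 := hsync1 t0 ht0s1 (by omega)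
  have hsy2t0 := hsync2 t0 ht0s2 (by omega)
  have h0 : (p1 t0).1 - (p2 t0).1 ≤ 0 := by omega
  -- 0 ≤ f t1
  have hm3 := mono1 t1 e1 (by omega) ht1e1 (le_refl _)
  have hm4 := mono2 t1 e2 (by omega) ht1e2 (le_refl _)
  have hsy1t1 := hsync1 t1 (by omega) ht1e1
  have hsy2t1 := hsync2 t1 (by omega) ht1e2
  have h1 : 0 ≤ (p1 t1).1 - (p2 t1).1 := by omega
  -- step bound
  have hstepf : ∀ t, t0 ≤ t → t < t1 →
      (p1 (t + 1)).1 - (p2 (t + 1)).1 ≤ (p1 t).1 - (p2 t).1 + 1 := by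
    intro t ht ht'
    rcases hstep1 t (by omega) (by omega) with h | h <;>
      rcases hstep2 t (by omega) (by omega) with h' | h' <;>
        rw [h, h'] <;> simp <;> omega
  obtain ⟨t, htl, htr, htz⟩ := int_ivt_s10 (fun t => (p1 t).1 - (p2 t).1) t0 t1 ht01 hstepf h0 h1
  have hxs : (p1 t).1 = (p2 t).1 := by simpa [sub_eq_zero] using htz
  have hsy1t := hsync1 t (by omega) (by omega)
  have hsy2t := hsync2 t (by omega) (by omega)
  have hys : (p1 t).2 = (p2 t).2 := by omega
  have heq : p1 t = p2 t := Prod.ext hxs hys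
  have hm5 := mono1 s1 t (le_refl _) (by omega) (by omega)
  have hm6 := mono1 t e1 (by omega) (by omega) (le_refl _)
  have hm7 := mono2 s2 t (le_refl _) (by omega) (by omega)
  have hm8 := mono2 t e2 (by omega) (by omega) (le_refl _)
  exact ⟨t, by omega, by omega, by omega, by omega, heq, by omega, by omega, by omega,
    by rw [hys]; omega⟩
end

section
/- For agents with start/goal nodes satisfying (S1.x−G1.x)(S2.x−G2.x) ≥ 0, (S1.y−G1.y)(S2.y−G2.y) ≥ 0, Manhattan-optimality (|Si.x−Gi.x|+|Si.y−Gi.y| = Gi.t−Si.t > 0), equal start times S1.t = S2.t, and the existence of a cell c in both the S1-G1 and S2-G2 rectangles with equal Manhattan distances d(S1,c)=d(S2,c): for every cell c' in the intersection of the two rectangles, d(S1,c') = d(S2,c'). -/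
/-- Manhattan distance between two cells. -/
def ManhattanDist (a b : ℤ × ℤ) : ℤ := |a.1 - b.1| + |a.2 - b.2|

/-- On one axis, under the same-direction condition, the difference of distances from
the two starts is the same at any two points lying in both intervals. -/
lemma axis_const (a b a' b' x y : ℤ)
    (hdir : (a - b) * (a' - b') ≥ 0)
    (hx1 : min a b ≤ x) (hx2 : x ≤ max a b)
    (hx3 : min a' b' ≤ x) (hx4 : x ≤ max a' b')
    (hy1 : min a b ≤ y) (hy2 : y ≤ max a b)
    (hy3 : min a' b' ≤ y) (hy4 : y ≤ max a' b') :
    |a - x| - |a' - x| = |a - y| - |a' - y| := by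
  have hsign : (a - b ≥ 0 ∧ a' - b' ≥ 0) ∨ (a - b ≤ 0 ∧ a' - b' ≤ 0) := by
    rcases lt_trichotomy (a - b) 0 with h | h | h
    · right; constructor; omega; nlinarith
    · rcases le_or_gt (a' - b') 0 with h' | h'
      · right; omega
      · left; omega
    · left; constructor; omega; nlinarith
  simp only [le_min_iff, min_le_iff, le_max_iff, max_le_iff] at *
  rcases abs_cases (a - x) with ⟨e1, _⟩ | ⟨e1, _⟩ <;>
  rcases abs_cases (a' - x) with ⟨e2, _⟩ | ⟨e2, _⟩ <;>
  rcases abs_cases (a - y) with ⟨e3, _⟩ | ⟨e3, _⟩ <;>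
  rcases abs_cases (a' - y) with ⟨e4, _⟩ | ⟨e4, _⟩ <;>
  omega

/-- Under same-direction movement, Manhattan-optimality with positive duration, equal
start times, and the existence of one cell `c` in both rectangles with equal Manhattan
distances from the two starts, every cell `c'` in the intersection of the two rectangles
has equal Manhattan distances from the two starts. -/
theorem equal_distance_on_whole_rectangle
    (S1 G1 S2 G2 : ℤ × ℤ) (tS1 tG1 tS2 tG2 : ℤ)
    (hdirx : (S1.1 - G1.1) * (S2.1 - G2.1) ≥ 0)
    (hdiry : (S1.2 - G1.2) * (S2.2 - G2.2) ≥ 0)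
    (hopt1 : ManhattanDist S1 G1 = tG1 - tS1) (hpos1 : tG1 - tS1 > 0)
    (hopt2 : ManhattanDist S2 G2 = tG2 - tS2) (hpos2 : tG2 - tS2 > 0)
    (hstart : tS1 = tS2)
    (c : ℤ × ℤ) (hc1 : InRect S1 G1 c) (hc2 : InRect S2 G2 c)
    (hceq : ManhattanDist S1 c = ManhattanDist S2 c) :
    ∀ c' : ℤ × ℤ, InRect S1 G1 c' → InRect S2 G2 c' →
      ManhattanDist S1 c' = ManhattanDist S2 c' := by
  intro c' h1 h2
  obtain ⟨a1, a2, a3, a4⟩ := hc1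
  obtain ⟨b1, b2, b3, b4⟩ := hc2
  obtain ⟨p1, p2, p3, p4⟩ := h1
  obtain ⟨q1, q2, q3, q4⟩ := h2
  have hx := axis_const S1.1 G1.1 S2.1 G2.1 c'.1 c.1 hdirx p1 p2 q1 q2 a1 a2 b1 b2
  have hy := axis_const S1.2 G1.2 S2.2 G2.2 c'.2 c.2 hdiry p3 p4 q3 q4 a3 a4 b3 b4
  simp only [ManhattanDist] at *
  omega
end

section
/- Under the rectangle conflict conditions, the barrier constraint B(a_i, R_i, R_g) blocks all Manhattan-optimal paths of agent a_i from S_i to G_i: every path of length equal to the Manhattan distance from S_i to G_i visits some node on the exit border R_iR_g at its prescribed timestep. -/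
lemma ivt_int (L : ℕ) (x : ℕ → ℤ) (c : ℤ)
    (h : ∀ t < L, (x (t+1) - x t).natAbs ≤ 1)
    (h1 : min (x 0) (x L) ≤ c) (h2 : c ≤ max (x 0) (x L)) :
    ∃ t ≤ L, x t = c := by
  induction L with
  | zero => exact ⟨0, le_refl 0, by omega⟩
  | succ n ih =>
    have hb := h n (Nat.lt_succ_self n)
    have key : (min (x 0) (x n) ≤ c ∧ c ≤ max (x 0) (x n)) ∨ c = x (n+1) := by omega
    rcases key with ⟨ha, hb'⟩ | he
    · obtain ⟨t, ht, he⟩ := ih (fun t ht => h t (ht.trans (Nat.lt_succ_self n))) ha hb'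
      exact ⟨t, ht.trans (Nat.le_succ n), he⟩
    · exact ⟨n+1, le_refl _, he.symm⟩

/-- Under the rectangle-conflict conditions, the barrier constraint on the exit border
blocks all Manhattan-optimal paths of the agent: every path from `S` to `G` of length
equal to the Manhattan distance visits some node of the exit border
`{(xb, y) : y1 ≤ y ≤ y2}` at its prescribed timestep (the Manhattan distance from `S`,
offset by the start time `tS`).  The exit border lies between `S` and `G` (the rectangle
is contained in the `S`-`G` rectangle) and spans the side of the rectangle opposite to
`S`, with `G` weakly beyond it. -/
theorem barrier_blocks_all_manhattan_optimal_paths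
    (S G : ℤ × ℤ) (xb y1 y2 tS : ℤ)
    (hy : y1 ≤ y2)
    (hx1 : min S.1 G.1 ≤ xb) (hx2 : xb ≤ max S.1 G.1)
    (hspan1 : y1 ≤ min S.2 G.2) (hspan2 : max S.2 G.2 ≤ y2)
    (L : ℕ) (p : ℕ → ℤ × ℤ)
    (hS : p 0 = S) (hG : p L = G)
    (hstep : ∀ t < L, GridStep (p t) (p (t + 1)))
    (hopt : (L : ℤ) = |S.1 - G.1| + |S.2 - G.2|) :
    ∃ t ≤ L, (p t).1 = xb ∧ y1 ≤ (p t).2 ∧ (p t).2 ≤ y2 ∧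
      tS + (t : ℤ) = tS + |xb - S.1| + |(p t).2 - S.2| := by
  simp only [GridStep, Int.abs_eq_natAbs] at hstep hopt ⊢
  -- each step moves by at most 1 in each coordinate
  have hst : ∀ t < L, ((p (t+1)).1 - (p t).1).natAbs + ((p (t+1)).2 - (p t).2).natAbs ≤ 1 := by
    intro t ht
    have := hstep t ht
    omega
  -- prefix bound
  have A : ∀ t ≤ L, ((p t).1 - S.1).natAbs + ((p t).2 - S.2).natAbs ≤ t := by
    intro t
    induction t with
    | zero => intro _; simp [hS]
    | succ n ih =>
      intro hn
      have h1 := ih (by omega)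
      have h2 := hst n (by omega)
      omega
  -- suffix bound
  have B : ∀ k ≤ L, (G.1 - (p (L - k)).1).natAbs + (G.2 - (p (L - k)).2).natAbs ≤ k := by
    intro k
    induction k with
    | zero => intro _; simp [hG]
    | succ n ih =>
      intro hn
      have h1 := ih (by omega)
      have h2 := hst (L - (n+1)) (by omega)
      have he : L - (n+1) + 1 = L - n := by omega
      rw [he] at h2
      omega
  have B' : ∀ t ≤ L, (G.1 - (p t).1).natAbs + (G.2 - (p t).2).natAbs ≤ L - t := by
    intro t ht
    have := B (L - t) (by omega)
    have he : L - (L - t) = t := by omega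
    rw [he] at this
    omega
  -- find t with x-coordinate xb
  have hx0 : (p 0).1 = S.1 := by rw [hS]
  have hxL : (p L).1 = G.1 := by rw [hG]
  obtain ⟨t, htL, hxt⟩ := ivt_int L (fun t => (p t).1) xb
    (fun t ht => by show ((p (t+1)).1 - (p t).1).natAbs ≤ 1; have := hstep t ht; omega)
    (by omega) (by omega)
  refine ⟨t, htL, hxt, ?_, ?_, ?_⟩ <;>
  · have h1 := A t htL
    have h2 := B' t htL
    omega
end
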